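/- There exist constants δ > 0 and C > 0 such that for every real K ≥ 1, the Lebesgue measure of the set { x ∈ [0,1] : x is irrational and S(x) > K } is at most C·e^{−δ K}. -/

import Mathlib

open Filter MeasureTheory

/-- `cfDen x n` is the denominator `v_n` of the `n`-th convergent of the
continued fraction expansion of `x` (so `v₀ = 1`, `v₁ = a₁`,
`v_{ℓ+1} = a_{ℓ+1} v_ℓ + v_{ℓ−1}`). -/
noncomputable def cfDen (x : ℝ) (n : ℕ) : ℝ := (GenContFract.of x).dens n

open GenContFract

namespace CFAux

lemma irr_fract {x : ℝ} (h : Irrational x) : Irrational (Int.fract x) := by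
  rw [Int.fract]; exact h.sub_intCast _

lemma irr_mem_Ioo {x : ℝ} (h : Irrational x) (hx : x ∈ Set.Icc (0:ℝ) 1) :
    x ∈ Set.Ioo (0:ℝ) 1 := by
  refine ⟨lt_of_le_of_ne hx.1 ?_, lt_of_le_of_ne hx.2 ?_⟩
  · intro h0; exact (h.ne_int 0 (by exact_mod_cast h0.symm)).elim
  · intro h1; exact (h.ne_int 1 (by exact_mod_cast h1)).elim

lemma fract_mem_Ioo {x : ℝ} (h : Irrational x) : Int.fract x ∈ Set.Ioo (0:ℝ) 1 :=
  ⟨lt_of_le_of_ne (Int.fract_nonneg x) (fun h0 => (irr_fract h).ne_int 0 (by exact_mod_cast h0.symm)),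
    Int.fract_lt_one x⟩

lemma fract_self {x : ℝ} (hx : x ∈ Set.Ioo (0:ℝ) 1) : Int.fract x = x :=
  Int.fract_eq_self.mpr ⟨hx.1.le, hx.2⟩

/-- The digit event set: `x ∈ (0,1)` irrational whose `(n+1)`-st digit exceeds `m`. -/
def Eset (n : ℕ) (m : ℝ) : Set ℝ :=
  {x | x ∈ Set.Ioo (0:ℝ) 1 ∧ Irrational x ∧
    ∃ p : IntFractPair ℝ, IntFractPair.stream x (n+1) = some p ∧ m < (p.b : ℝ)}

lemma stream_one {x : ℝ} (h : Irrational x) (hx : x ∈ Set.Ioo (0:ℝ) 1) :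
    IntFractPair.stream x 1 = some (IntFractPair.of x⁻¹) := by
  have hf : Int.fract x ≠ 0 := by rw [fract_self hx]; exact ne_of_gt hx.1
  rw [IntFractPair.stream_succ hf 0, fract_self hx, IntFractPair.stream_zero]

lemma stream_shift {x : ℝ} (h : Irrational x) (hx : x ∈ Set.Ioo (0:ℝ) 1) (n : ℕ) :
    IntFractPair.stream x (n+2) = IntFractPair.stream (Int.fract x⁻¹) (n+1) := by
  have hxne : Int.fract x ≠ 0 := by rw [fract_self hx]; exact ne_of_gt hx.1
  have hinv : Irrational x⁻¹ := h.inv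
  have hfr : Int.fract x⁻¹ ≠ 0 :=
    fun h0 => (irr_fract hinv).ne_int 0 (by exact_mod_cast h0)
  have hy : Int.fract x⁻¹ ∈ Set.Ioo (0:ℝ) 1 := fract_mem_Ioo hinv
  have hyne : Int.fract (Int.fract x⁻¹) ≠ 0 := by
    rw [fract_self hy]; exact hfr
  rw [IntFractPair.stream_succ hxne (n+1), fract_self hx,
    IntFractPair.stream_succ hfr n, IntFractPair.stream_succ hyne n, fract_self hy]

lemma Tmap_mem {x : ℝ} (h : Irrational x) : Int.fract x⁻¹ ∈ Set.Ioo (0:ℝ) 1 :=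
  fract_mem_Ioo h.inv

lemma Eset_zero_subset {m : ℝ} (hm : 0 < m) : Eset 0 m ⊆ Set.Ioo 0 (1/m) := by
  rintro x ⟨hx, hirr, p, hp, hb⟩
  rw [show (0+1 : ℕ) = 1 from rfl, stream_one hirr hx] at hp
  obtain rfl : IntFractPair.of x⁻¹ = p := by injection hp
  have hb' : m < (⌊x⁻¹⌋ : ℝ) := hb
  have h1 : m < x⁻¹ := lt_of_lt_of_le hb' (Int.floor_le _)
  have hxpos := hx.1
  refine ⟨hxpos, ?_⟩
  rw [one_div, ← inv_inv x]
  exact inv_strictAnti₀ hm h1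

lemma Eset_succ_subset (n : ℕ) (m : ℝ) :
    Eset (n+1) m ⊆ ⋃ k : ℕ, (fun y : ℝ => (y + ((k:ℝ)+1))⁻¹) '' Eset n m := by
  rintro x ⟨hx, hirr, p, hp, hb⟩
  have hinv1 : (1:ℝ) ≤ x⁻¹ := by
    rw [show (1:ℝ) = 1⁻¹ by norm_num]
    exact inv_anti₀ hx.1 hx.2.le
  have hfloor : 1 ≤ ⌊x⁻¹⌋ := by exact_mod_cast Int.le_floor.2 (by exact_mod_cast hinv1)
  set y := Int.fract x⁻¹ with hy
  have hymem : y ∈ Set.Ioo (0:ℝ) 1 := Tmap_mem hirr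
  have hyirr : Irrational y := irr_fract hirr.inv
  refine Set.mem_iUnion.2 ⟨(⌊x⁻¹⌋ - 1).toNat, ⟨y, ⟨hymem, hyirr, p, ?_, hb⟩, ?_⟩⟩
  · rw [← stream_shift hirr hx n]; exact hp
  · have htn : ((⌊x⁻¹⌋ - 1).toNat : ℤ) = ⌊x⁻¹⌋ - 1 := Int.toNat_of_nonneg (by omega)
    have hk : (((⌊x⁻¹⌋ - 1).toNat : ℕ) : ℝ) + 1 = (⌊x⁻¹⌋ : ℝ) := by
      have : (((⌊x⁻¹⌋ - 1).toNat : ℕ) : ℝ) = ((⌊x⁻¹⌋:ℝ) - 1) := by exact_mod_cast congrArg (Int.cast : ℤ → ℝ) htn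
      rw [this]; ring
    show (y + ((((⌊x⁻¹⌋ - 1).toNat : ℕ) : ℝ) + 1))⁻¹ = x
    rw [hk]
    have hsum : y + (⌊x⁻¹⌋:ℝ) = x⁻¹ := by rw [hy, Int.fract]; ring
    rw [hsum, inv_inv]

lemma lipschitz_inv_shift (k : ℕ) :
    LipschitzOnWith (⟨1/((k:ℝ)+1)^2, by positivity⟩ : NNReal)
      (fun y : ℝ => (y + ((k:ℝ)+1))⁻¹) (Set.Ioo (0:ℝ) 1) := by
  refine lipschitzOnWith_iff_dist_le_mul.2 ?_
  intro a ha b hb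
  show dist (a + ((k:ℝ)+1))⁻¹ (b + ((k:ℝ)+1))⁻¹ ≤ (1/((k:ℝ)+1)^2) * dist a b
  have hk1 : (0:ℝ) < (k:ℝ)+1 := by positivity
  have hap : (0:ℝ) < a + ((k:ℝ)+1) := by have := ha.1; linarith
  have hbp : (0:ℝ) < b + ((k:ℝ)+1) := by have := hb.1; linarith
  rw [Real.dist_eq, Real.dist_eq]
  have key : (a + ((k:ℝ)+1))⁻¹ - (b + ((k:ℝ)+1))⁻¹ =
      (b - a) / ((a + ((k:ℝ)+1)) * (b + ((k:ℝ)+1))) :=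
    by rw [inv_sub_inv hap.ne' hbp.ne']; congr 1; ring
  rw [key, abs_div, abs_of_pos (by positivity : (0:ℝ) < (a + ((k:ℝ)+1)) * (b + ((k:ℝ)+1)))]
  rw [div_le_iff₀ (by positivity)]
  have h1 : |b - a| = |a - b| := abs_sub_comm b a
  have h2 : ((k:ℝ)+1)^2 ≤ (a + ((k:ℝ)+1)) * (b + ((k:ℝ)+1)) := by
    have := ha.1; have := hb.1; nlinarith
  have habs : (0:ℝ) ≤ |a - b| := abs_nonneg _
  have hc2 : (0:ℝ) < ((k:ℝ)+1)^2 := by positivity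
  rw [h1]
  calc |a - b| = (1/((k:ℝ)+1)^2) * |a - b| * ((k:ℝ)+1)^2 := by field_simp
  _ ≤ 1/((k:ℝ)+1)^2 * |a - b| * ((a + ((k:ℝ)+1)) * (b + ((k:ℝ)+1))) :=
      mul_le_mul_of_nonneg_left h2 (by positivity)

lemma volume_image_inv_shift (k : ℕ) {s : Set ℝ} (hs : s ⊆ Set.Ioo (0:ℝ) 1) :
    volume ((fun y : ℝ => (y + ((k:ℝ)+1))⁻¹) '' s) ≤
      ENNReal.ofReal (1/((k:ℝ)+1)^2) * volume s := by
  have hnn : (0:ℝ) ≤ 1/((k:ℝ)+1)^2 := by positivity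
  have hl : LipschitzOnWith (⟨1/((k:ℝ)+1)^2, hnn⟩ : NNReal)
      (fun y : ℝ => (y + ((k:ℝ)+1))⁻¹) s := (lipschitz_inv_shift k).mono hs
  have h := hl.hausdorffMeasure_image_le (d := 1) zero_le_one
  rw [MeasureTheory.hausdorffMeasure_real, ENNReal.rpow_one] at h
  refine h.trans (le_of_eq ?_)
  congr 1
  rw [ENNReal.ofReal_eq_coe_nnreal hnn]
  rfl

lemma tsum_inv_sq_le : (∑' k : ℕ, ENNReal.ofReal (1/((k:ℝ)+1)^2)) ≤ 2 := by
  have hs0 : Summable (fun n : ℕ => 1/((n:ℝ))^2) := hasSum_zeta_two.summable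
  have hsum : Summable (fun k : ℕ => 1/((k:ℝ)+1)^2) :=
    ((summable_nat_add_iff 1).2 hs0).congr (fun k => by push_cast; ring_nf)
  have h1 := hs0.tsum_eq_zero_add
  rw [hasSum_zeta_two.tsum_eq] at h1
  have h2 : (∑' k : ℕ, 1/(((k:ℕ)+1:ℕ):ℝ)^2) = ∑' k : ℕ, 1/((k:ℝ)+1)^2 := by
    congr 1; funext k; push_cast; ring_nf
  have hpi : Real.pi^2/6 ≤ 2 := by nlinarith [Real.pi_lt_d2, Real.pi_pos]
  have h0 : (1:ℝ)/((0:ℕ):ℝ)^2 = 0 := by norm_num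
  have hval : (∑' k : ℕ, 1/((k:ℝ)+1)^2) ≤ 2 := by
    rw [← h2]
    have : (∑' k : ℕ, 1/(((k:ℕ)+1:ℕ):ℝ)^2) = Real.pi^2/6 := by
      rw [h1] at *; linarith [h1]
    rw [this]; exact hpi
  calc (∑' k : ℕ, ENNReal.ofReal (1/((k:ℝ)+1)^2))
      = ENNReal.ofReal (∑' k : ℕ, 1/((k:ℝ)+1)^2) :=
        (ENNReal.ofReal_tsum_of_nonneg (fun k => by positivity) hsum).symm
  _ ≤ ENNReal.ofReal 2 := ENNReal.ofReal_le_ofReal hval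
  _ = 2 := by norm_num

lemma Eset_subset_Ioo (n : ℕ) (m : ℝ) : Eset n m ⊆ Set.Ioo (0:ℝ) 1 := fun _ h => h.1

lemma Eset_volume (n : ℕ) {m : ℝ} (hm : 0 < m) :
    volume (Eset n m) ≤ 2^n * ENNReal.ofReal (1/m) := by
  induction n with
  | zero =>
    calc volume (Eset 0 m) ≤ volume (Set.Ioo (0:ℝ) (1/m)) :=
          measure_mono (Eset_zero_subset hm)
    _ = ENNReal.ofReal (1/m) := by rw [Real.volume_Ioo, sub_zero]
    _ = 2^0 * ENNReal.ofReal (1/m) := by rw [pow_zero, one_mul]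
  | succ n ih =>
    calc volume (Eset (n+1) m)
        ≤ volume (⋃ k : ℕ, (fun y : ℝ => (y + ((k:ℝ)+1))⁻¹) '' Eset n m) :=
          measure_mono (Eset_succ_subset n m)
    _ ≤ ∑' k : ℕ, volume ((fun y : ℝ => (y + ((k:ℝ)+1))⁻¹) '' Eset n m) :=
          measure_iUnion_le _
    _ ≤ ∑' k : ℕ, ENNReal.ofReal (1/((k:ℝ)+1)^2) * volume (Eset n m) :=
          ENNReal.tsum_le_tsum (fun k => volume_image_inv_shift k (Eset_subset_Ioo n m))
    _ = (∑' k : ℕ, ENNReal.ofReal (1/((k:ℝ)+1)^2)) * volume (Eset n m) :=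
          ENNReal.tsum_mul_right
    _ ≤ 2 * volume (Eset n m) := mul_le_mul_left tsum_inv_sq_le _
    _ ≤ 2 * (2^n * ENNReal.ofReal (1/m)) := mul_le_mul_right ih _
    _ = 2^(n+1) * ENNReal.ofReal (1/m) := by ring

lemma not_terminatedAt {x : ℝ} (h : Irrational x) (n : ℕ) :
    ¬(GenContFract.of x).TerminatedAt n := by
  intro ht
  obtain ⟨q, hq⟩ := (terminates_iff_rat x).1 ⟨n, ht⟩
  exact h ⟨q, hq.symm⟩

lemma fib_ge (n : ℕ) : (2/3) * (3/2:ℝ)^n ≤ (Nat.fib (n+1) : ℝ) := by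
  induction n using Nat.twoStepInduction with
  | zero => norm_num
  | one => norm_num
  | more n ih1 ih2 =>
    have hfib : (Nat.fib (n+2+1) : ℝ) = (Nat.fib (n+1+1) : ℝ) + (Nat.fib (n+1) : ℝ) := by
      rw [show n+2+1 = (n+1)+2 by ring, Nat.fib_add_two]; push_cast; ring
    have hp : (0:ℝ) < (3/2:ℝ)^n := by positivity
    rw [hfib]
    calc (2/3) * (3/2:ℝ)^(n+2) = (9/4) * ((2/3) * (3/2:ℝ)^n) := by ring
    _ ≤ (5/2) * ((2/3) * (3/2:ℝ)^n) := by nlinarith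
    _ = (2/3) * (3/2:ℝ)^(n+1) + (2/3) * (3/2:ℝ)^n := by ring
    _ ≤ (Nat.fib (n+1+1) : ℝ) + (Nat.fib (n+1) : ℝ) := by
        exact add_le_add ih2 ih1

lemma fib_le_cfDen {x : ℝ} (h : Irrational x) (n : ℕ) :
    (Nat.fib (n+1) : ℝ) ≤ cfDen x n := by
  rcases Nat.eq_zero_or_pos n with rfl | hn
  · exact succ_nth_fib_le_of_nth_den (Or.inl rfl)
  · exact succ_nth_fib_le_of_nth_den (Or.inr (not_terminatedAt h _))

lemma one_le_cfDen {x : ℝ} (h : Irrational x) (n : ℕ) : 1 ≤ cfDen x n := by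
  refine le_trans ?_ (fib_le_cfDen h n)
  exact_mod_cast Nat.succ_le_of_lt (Nat.fib_pos.2 n.succ_pos)

lemma lower_cfDen {x : ℝ} (h : Irrational x) (n : ℕ) :
    (2/3) * (3/2:ℝ)^n ≤ cfDen x n := (fib_ge n).trans (fib_le_cfDen h n)

lemma exists_stream {x : ℝ} (h : Irrational x) (n : ℕ) :
    ∃ p : IntFractPair ℝ, IntFractPair.stream x (n+1) = some p := by
  have h1 : (GenContFract.of x).s.get? n ≠ none := not_terminatedAt h n
  obtain ⟨gp, hgp⟩ := Option.ne_none_iff_exists'.1 h1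
  obtain ⟨p, hp, -⟩ := IntFractPair.exists_succ_get?_stream_of_gcf_of_get?_eq_some hgp
  exact ⟨p, hp⟩

lemma cfDen_succ_le {x : ℝ} (h : Irrational x) {n : ℕ} {p : IntFractPair ℝ}
    (hp : IntFractPair.stream x (n+1) = some p) :
    cfDen x (n+1) ≤ ((p.b : ℝ) + 1) * cfDen x n := by
  have hs : (GenContFract.of x).s.get? n = some ⟨1, (p.b : ℝ)⟩ :=
    get?_of_eq_some_of_succ_get?_intFractPair_stream hp
  have hb1 : (1:ℝ) ≤ (p.b : ℝ) := by exact_mod_cast IntFractPair.one_le_succ_nth_stream_b hp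
  cases n with
  | zero =>
    have h1 : cfDen x 1 = (p.b : ℝ) := first_den_eq hs
    have h0 : cfDen x 0 = 1 := zeroth_den_eq_one
    rw [h1, h0]; linarith
  | succ m =>
    have hrec : cfDen x (m+2) =
        (p.b : ℝ) * cfDen x (m+1) + 1 * cfDen x m :=
      dens_recurrence hs rfl rfl
    have hmono : cfDen x m ≤ cfDen x (m+1) := of_den_mono
    have hpos : 0 ≤ cfDen x (m+1) := le_trans zero_le_one (one_le_cfDen h (m+1))
    rw [hrec]; nlinarith

lemma mem_Eset_of_term_large {x : ℝ} (h : Irrational x) (hx : x ∈ Set.Ioo (0:ℝ) 1)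
    {n : ℕ} {t : ℝ} (ht : 0 < t)
    (hterm : t < Real.log (cfDen x (n+1)) / cfDen x n) :
    x ∈ Eset n ((t/4) * Real.exp ((2/3) * (3/2:ℝ)^n * t / 2)) := by
  set v := cfDen x n with hv
  set w := cfDen x (n+1) with hw
  have hv1 : 1 ≤ v := one_le_cfDen h n
  have hvpos : 0 < v := lt_of_lt_of_le zero_lt_one hv1
  have hF : (2/3) * (3/2:ℝ)^n ≤ v := lower_cfDen h n
  have hw1 : 1 ≤ w := one_le_cfDen h (n+1)
  have hlog : v * t < Real.log w := by
    have := (lt_div_iff₀ hvpos).1 hterm; linarith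
  have hexp : Real.exp (v * t) < w := by
    calc Real.exp (v * t) < Real.exp (Real.log w) := Real.exp_lt_exp.2 hlog
    _ = w := Real.exp_log (by linarith)
  obtain ⟨p, hp⟩ := exists_stream h n
  have hb1 : (1:ℝ) ≤ (p.b : ℝ) := by exact_mod_cast IntFractPair.one_le_succ_nth_stream_b hp
  have hwle : w ≤ ((p.b : ℝ) + 1) * v := cfDen_succ_le h hp
  have hwle2 : w ≤ 2 * (p.b : ℝ) * v := by nlinarith
  -- exp (v*t) ≥ (v*t/2) * exp (v*t/2) ≥ (v*t/2) * exp (F*t/2)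
  have he1 : Real.exp (v * t) = Real.exp (v*t/2) * Real.exp (v*t/2) := by
    rw [← Real.exp_add]; ring_nf
  have he2 : v*t/2 ≤ Real.exp (v*t/2) := by
    have := Real.add_one_le_exp (v*t/2); linarith
  have he3 : Real.exp ((2/3) * (3/2:ℝ)^n * t / 2) ≤ Real.exp (v*t/2) := by
    apply Real.exp_le_exp.2
    have h32 : (0:ℝ) < (3/2:ℝ)^n := by positivity
    nlinarith
  have hee : (v*t/2) * Real.exp ((2/3) * (3/2:ℝ)^n * t / 2) ≤ Real.exp (v * t) := by
    rw [he1]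
    have hpos2 : (0:ℝ) ≤ v*t/2 := by positivity
    exact mul_le_mul he2 he3 (Real.exp_pos _).le (Real.exp_pos _).le
  have hfinal : (t/4) * Real.exp ((2/3) * (3/2:ℝ)^n * t / 2) < (p.b : ℝ) := by
    have hA : (0:ℝ) < Real.exp ((2/3) * (3/2:ℝ)^n * t / 2) := Real.exp_pos _
    have hchain : (v*t/2) * Real.exp ((2/3) * (3/2:ℝ)^n * t / 2) < 2 * (p.b : ℝ) * v :=
      lt_of_le_of_lt hee (lt_of_lt_of_le hexp hwle2)
    nlinarith
  exact ⟨hx, h, p, hp, hfinal⟩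

noncomputable def mval (n : ℕ) (K : ℝ) : ℝ :=
  (K/16) * (3/4:ℝ)^n * Real.exp ((K/12) * (9/8:ℝ)^n)

lemma mval_pos (n : ℕ) {K : ℝ} (hK : 0 < K) : 0 < mval n K := by
  unfold mval; positivity

lemma pow_98 (n : ℕ) : (9/8:ℝ)^n = (3/2:ℝ)^n * (3/4:ℝ)^n := by
  rw [← mul_pow]; norm_num

lemma mem_Eset_mval {x : ℝ} (h : Irrational x) (hx : x ∈ Set.Ioo (0:ℝ) 1)
    {n : ℕ} {K : ℝ} (hK : 0 < K)
    (hterm : K/4 * (3/4:ℝ)^n < Real.log (cfDen x (n+1)) / cfDen x n) :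
    x ∈ Eset n (mval n K) := by
  have ht : 0 < K/4 * (3/4:ℝ)^n := by positivity
  have hEq : mval n K =
      ((K/4 * (3/4:ℝ)^n)/4) * Real.exp ((2/3) * (3/2:ℝ)^n * (K/4 * (3/4:ℝ)^n) / 2) := by
    unfold mval
    rw [show (K/12) * (9/8:ℝ)^n = (2/3) * (3/2:ℝ)^n * (K/4 * (3/4:ℝ)^n) / 2 by
      rw [pow_98]; ring]
    ring
  rw [hEq]
  exact mem_Eset_of_term_large h hx ht hterm

lemma exists_large_term {x : ℝ} {K : ℝ} (hK : 1 ≤ K)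
    (hS : (∑' n : ℕ, ENNReal.ofReal (Real.log (cfDen x (n + 1)) / cfDen x n))
            > ENNReal.ofReal K) :
    ∃ n : ℕ, K/4 * (3/4:ℝ)^n < Real.log (cfDen x (n+1)) / cfDen x n := by
  by_contra hc
  push_neg at hc
  have hsum : Summable (fun n : ℕ => K/4 * (3/4:ℝ)^n) :=
    (summable_geometric_of_lt_one (by norm_num) (by norm_num)).mul_left _
  have htsum : (∑' n : ℕ, K/4 * (3/4:ℝ)^n) = K := by
    rw [tsum_mul_left, tsum_geometric_of_lt_one (by norm_num) (by norm_num)]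
    norm_num
  have hle : (∑' n : ℕ, ENNReal.ofReal (Real.log (cfDen x (n + 1)) / cfDen x n))
      ≤ ENNReal.ofReal K := by
    calc (∑' n : ℕ, ENNReal.ofReal (Real.log (cfDen x (n + 1)) / cfDen x n))
        ≤ ∑' n : ℕ, ENNReal.ofReal (K/4 * (3/4:ℝ)^n) :=
          ENNReal.tsum_le_tsum (fun n => ENNReal.ofReal_le_ofReal (hc n))
    _ = ENNReal.ofReal (∑' n : ℕ, K/4 * (3/4:ℝ)^n) :=
          (ENNReal.ofReal_tsum_of_nonneg (fun n => by positivity) hsum).symm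
    _ = ENNReal.ofReal K := by rw [htsum]
  exact absurd hS (not_lt.2 hle)

lemma core_ineq (n : ℕ) : (16/3:ℝ)^n ≤
    Real.exp (12 * (Real.log (16/3))^2 / (Real.log (9/8))^2) *
      Real.exp ((1/12) * (9/8:ℝ)^n) := by
  set c := Real.log (16/3) with hcdef
  set L := Real.log (9/8) with hLdef
  have hc : 0 < c := Real.log_pos (by norm_num)
  have hL : 0 < L := Real.log_pos (by norm_num)
  have hLHS : (16/3:ℝ)^n = Real.exp ((n:ℝ) * c) := by
    rw [Real.exp_nat_mul, Real.exp_log (by norm_num : (0:ℝ) < 16/3)]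
  have h98 : (9/8:ℝ)^n = Real.exp ((n:ℝ) * L) := by
    rw [Real.exp_nat_mul, Real.exp_log (by norm_num : (0:ℝ) < 9/8)]
  rw [hLHS, ← Real.exp_add]
  apply Real.exp_le_exp.2
  -- goal : n*c ≤ 12*c^2/L^2 + (1/12)*(9/8)^n
  have hquad : ((n:ℝ)*L/2)^2 ≤ (9/8:ℝ)^n := by
    rw [h98]
    have h1 : (n:ℝ)*L/2 + 1 ≤ Real.exp ((n:ℝ)*L/2) := Real.add_one_le_exp _
    have h2 : Real.exp ((n:ℝ)*L) = Real.exp ((n:ℝ)*L/2) * Real.exp ((n:ℝ)*L/2) := by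
      rw [← Real.exp_add]; ring_nf
    have hnl : 0 ≤ (n:ℝ)*L/2 := by positivity
    rw [h2]
    nlinarith
  have hexpand : 12*c^2/L^2 + ((n:ℝ))^2*L^2/48 - (n:ℝ)*c =
      ((n:ℝ)*L^2 - 24*c)^2 / (48*L^2) := by
    field_simp
    ring
  have hnn : 0 ≤ ((n:ℝ)*L^2 - 24*c)^2 / (48*L^2) := by positivity
  have hkey : (n:ℝ)*c ≤ 12*c^2/L^2 + ((n:ℝ))^2*L^2/48 := by linarith
  nlinarith [hquad, hkey]

lemma key_real {K : ℝ} (hK : 1 ≤ K) (n : ℕ) :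
    (2:ℝ)^n * (1 / mval n K) ≤
      (32 * Real.exp (12 * (Real.log (16/3))^2 / (Real.log (9/8))^2)) *
        Real.exp (-(1/12) * K) * (1/2:ℝ)^n := by
  have hKpos : 0 < K := by linarith
  have hmpos : 0 < mval n K := mval_pos n hKpos
  set E := Real.exp (12 * (Real.log (16/3))^2 / (Real.log (9/8))^2) with hE
  have hEpos : 0 < E := Real.exp_pos _
  rw [mul_one_div, div_le_iff₀ hmpos]
  have h98one : (1:ℝ) ≤ (9/8:ℝ)^n := one_le_pow₀ (by norm_num)
  set A := Real.exp ((1/12) * ((9/8:ℝ)^n - 1)) with hA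
  have hApos : 0 < A := Real.exp_pos _
  have step1 : A ≤ Real.exp (-(1/12) * K) * Real.exp ((K/12) * (9/8:ℝ)^n) := by
    rw [hA, ← Real.exp_add]
    apply Real.exp_le_exp.2
    nlinarith
  have stepexp : Real.exp ((1/12) * (9/8:ℝ)^n) = Real.exp (1/12 : ℝ) * A := by
    rw [hA, ← Real.exp_add]; congr 1; ring
  have hexp112 : Real.exp (1/12 : ℝ) ≤ 2 := by
    have h1 : (11/12:ℝ) ≤ Real.exp (-(1/12) : ℝ) := by
      have := Real.add_one_le_exp (-(1/12) : ℝ); linarith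
    have h2 : Real.exp (1/12 : ℝ) = (Real.exp (-(1/12) : ℝ))⁻¹ := by
      rw [← Real.exp_neg]; norm_num
    rw [h2]
    rw [inv_le_comm₀ (Real.exp_pos _) (by norm_num)]
    linarith
  have core := core_ineq n
  rw [stepexp, ← hE] at core
  -- core : (16/3)^n ≤ E * (exp(1/12) * A)
  have h38 : (0:ℝ) ≤ (3/8:ℝ)^n := by positivity
  have step2 : (2:ℝ)^n ≤ E * 2 * A * (3/8:ℝ)^n := by
    have h2eq : (2:ℝ)^n = (16/3:ℝ)^n * (3/8:ℝ)^n := by rw [← mul_pow]; norm_num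
    rw [h2eq]
    have hmm : E * (Real.exp (1/12 : ℝ) * A) ≤ E * 2 * A := by
      nlinarith [mul_le_mul_of_nonneg_left hexp112 (mul_pos hEpos hApos).le]
    have : (16/3:ℝ)^n ≤ E * 2 * A := le_trans core hmm
    exact mul_le_mul_of_nonneg_right this h38
  have step3 : E * 2 * A * (3/8:ℝ)^n ≤ E * (2*K) * A * (3/8:ℝ)^n := by
    have : E * 2 * A ≤ E * (2*K) * A := by
      nlinarith [mul_le_mul_of_nonneg_left hK (by positivity : (0:ℝ) ≤ 2*E*A)]
    exact mul_le_mul_of_nonneg_right this h38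
  have step4 : E * (2*K) * A * (3/8:ℝ)^n ≤
      E * (2*K) * (Real.exp (-(1/12) * K) * Real.exp ((K/12) * (9/8:ℝ)^n)) * (3/8:ℝ)^n := by
    have h1 : E * (2*K) * A ≤
        E * (2*K) * (Real.exp (-(1/12) * K) * Real.exp ((K/12) * (9/8:ℝ)^n)) := by
      apply mul_le_mul_of_nonneg_left step1 (by positivity)
    exact mul_le_mul_of_nonneg_right h1 h38
  have hfin : E * (2*K) * (Real.exp (-(1/12) * K) * Real.exp ((K/12) * (9/8:ℝ)^n)) * (3/8:ℝ)^n
      = 32 * E * Real.exp (-(1/12) * K) * (1/2:ℝ)^n * mval n K := by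
    unfold mval
    rw [show (3/8:ℝ)^n = (1/2:ℝ)^n * (3/4:ℝ)^n by rw [← mul_pow]; norm_num]
    ring
  calc (2:ℝ)^n ≤ E * 2 * A * (3/8:ℝ)^n := step2
  _ ≤ E * (2*K) * A * (3/8:ℝ)^n := step3
  _ ≤ E * (2*K) * (Real.exp (-(1/12) * K) * Real.exp ((K/12) * (9/8:ℝ)^n)) * (3/8:ℝ)^n := step4
  _ = 32 * E * Real.exp (-(1/12) * K) * (1/2:ℝ)^n * mval n K := hfin

end CFAux

theorem measure_large_S :
    ∃ δ > (0 : ℝ), ∃ C > (0 : ℝ), ∀ K : ℝ, 1 ≤ K →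
      volume {x : ℝ | x ∈ Set.Icc (0 : ℝ) 1 ∧ Irrational x ∧
          (∑' n : ℕ, ENNReal.ofReal (Real.log (cfDen x (n + 1)) / cfDen x n))
            > ENNReal.ofReal K}
        ≤ ENNReal.ofReal (C * Real.exp (-δ * K)) := by
  refine ⟨1/12, by norm_num,
    2 * (32 * Real.exp (12 * (Real.log (16/3))^2 / (Real.log (9/8))^2)),
    by positivity, ?_⟩
  intro K hK
  have hKpos : (0:ℝ) < K := by linarith
  set C₀ : ℝ := 32 * Real.exp (12 * (Real.log (16/3))^2 / (Real.log (9/8))^2) with hC₀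
  have hC₀pos : 0 < C₀ := by positivity
  have hsub : {x : ℝ | x ∈ Set.Icc (0 : ℝ) 1 ∧ Irrational x ∧
      (∑' n : ℕ, ENNReal.ofReal (Real.log (cfDen x (n + 1)) / cfDen x n))
        > ENNReal.ofReal K} ⊆ ⋃ n : ℕ, CFAux.Eset n (CFAux.mval n K) := by
    rintro x ⟨hxIcc, hirr, hS⟩
    have hx : x ∈ Set.Ioo (0:ℝ) 1 := CFAux.irr_mem_Ioo hirr hxIcc
    obtain ⟨n, hn⟩ := CFAux.exists_large_term hK hS
    exact Set.mem_iUnion.2 ⟨n, CFAux.mem_Eset_mval hirr hx hKpos hn⟩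
  have hsummable : Summable (fun n : ℕ => C₀ * Real.exp (-(1/12) * K) * (1/2:ℝ)^n) :=
    (summable_geometric_of_lt_one (by norm_num) (by norm_num)).mul_left _
  calc volume {x : ℝ | x ∈ Set.Icc (0 : ℝ) 1 ∧ Irrational x ∧
      (∑' n : ℕ, ENNReal.ofReal (Real.log (cfDen x (n + 1)) / cfDen x n))
        > ENNReal.ofReal K}
      ≤ volume (⋃ n : ℕ, CFAux.Eset n (CFAux.mval n K)) := measure_mono hsub
  _ ≤ (∑' n : ℕ, volume (CFAux.Eset n (CFAux.mval n K))) := measure_iUnion_le _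
  _ ≤ (∑' n : ℕ, ENNReal.ofReal (C₀ * Real.exp (-(1/12) * K) * (1/2:ℝ)^n)) := by
      apply ENNReal.tsum_le_tsum
      intro n
      have h1 : volume (CFAux.Eset n (CFAux.mval n K)) ≤
          2^n * ENNReal.ofReal (1 / CFAux.mval n K) :=
        CFAux.Eset_volume n (CFAux.mval_pos n hKpos)
      have h2 : (2:ENNReal)^n * ENNReal.ofReal (1 / CFAux.mval n K) =
          ENNReal.ofReal ((2:ℝ)^n * (1 / CFAux.mval n K)) := by
        rw [ENNReal.ofReal_mul (by positivity : (0:ℝ) ≤ (2:ℝ)^n)]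
        congr 1
        rw [ENNReal.ofReal_pow (by norm_num : (0:ℝ) ≤ 2)]
        norm_num
      refine h1.trans ?_
      rw [h2]
      exact ENNReal.ofReal_le_ofReal (CFAux.key_real hK n)
  _ = ENNReal.ofReal (∑' n : ℕ, C₀ * Real.exp (-(1/12) * K) * (1/2:ℝ)^n) :=
      (ENNReal.ofReal_tsum_of_nonneg (fun n => by positivity) hsummable).symm
  _ = ENNReal.ofReal (2 * C₀ * Real.exp (-(1/12) * K)) := by
      rw [tsum_mul_left, tsum_geometric_of_lt_one (by norm_num) (by norm_num)]
      congr 1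
      rw [show ((1:ℝ) - 1/2)⁻¹ = 2 by norm_num]
      ring
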